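/- Let n ≥ 1 and let G be a simple graph on vertex set {1,…,n}. Let 𝒟_n = {X ∈ ℝ^{n×n} : Xᵀ = X, X positive semidefinite, trace(X) = 1} be the set of density matrices. Then the maximum of Σ_{(i,j)∈E} X_{ii} X_{jj} over X ∈ 𝒟_n equals 1 − 1/ω(G), and this maximum is attained. -/

import Mathlib

open Matrix BigOperators Finset

section MS

variable {n : ℕ} (G : SimpleGraph (Fin n)) [DecidableRel G.Adj]

noncomputable def MSw (i j : Fin n) : ℝ := if G.Adj i j then 1 else 0

lemma MSw_symm (i j : Fin n) : MSw G i j = MSw G j i := by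
  simp [MSw, G.adj_comm]

lemma MSw_self (i : Fin n) : MSw G i i = 0 := by simp [MSw]

lemma MSw_nonadj {i j : Fin n} (h : ¬ G.Adj i j) : MSw G i j = 0 := by simp [MSw, h]

noncomputable def MSF (x : Fin n → ℝ) : ℝ := ∑ i, ∑ j, MSw G i j * (x i * x j)

lemma MSF_eq (x : Fin n → ℝ) :
    MSF G x = ∑ i, ∑ j, if G.Adj i j then x i * x j else 0 := by
  unfold MSF MSw
  refine Finset.sum_congr rfl fun i _ => Finset.sum_congr rfl fun j _ => ?_
  split_ifs <;> ring

noncomputable def MSN (x : Fin n → ℝ) (i : Fin n) : ℝ := ∑ j, MSw G i j * x j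

lemma MSF_shift (x : Fin n → ℝ) (a b : Fin n) (hnadj : ¬ G.Adj a b) :
    MSF G (fun i => x i + ((if i = b then x a else 0) - (if i = a then x a else 0)))
      = MSF G x + 2 * x a * (MSN G x b - MSN G x a) := by
  set t := x a with ht
  set d : Fin n → ℝ := fun i => (if i = b then t else 0) - (if i = a then t else 0) with hd
  have key : ∀ g : Fin n → ℝ, ∑ i, d i * g i = t * g b - t * g a := by
    intro g
    have : ∀ i, d i * g i = (if i = b then t * g i else 0) - (if i = a then t * g i else 0) := by
      intro i
      simp only [hd]
      split_ifs <;> ring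
    rw [Finset.sum_congr rfl fun i _ => this i, Finset.sum_sub_distrib]
    simp
  have expand : MSF G (fun i => x i + d i)
      = MSF G x + (∑ i, d i * MSN G x i) + (∑ j, d j * MSN G x j)
        + (∑ i, d i * (∑ j, MSw G i j * d j)) := by
    unfold MSF MSN
    have h1 : ∀ i j : Fin n, MSw G i j * ((x i + d i) * (x j + d j))
        = MSw G i j * (x i * x j) + MSw G i j * (d i * x j) + MSw G i j * (x i * d j)
          + MSw G i j * (d i * d j) := by intro i j; ring
    simp only [h1, Finset.sum_add_distrib]
    congr 1
    congr 1
    congr 1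
    · refine Finset.sum_congr rfl fun i _ => ?_
      rw [Finset.mul_sum]
      refine Finset.sum_congr rfl fun j _ => by ring
    · rw [Finset.sum_comm]
      refine Finset.sum_congr rfl fun j _ => ?_
      rw [Finset.mul_sum]
      refine Finset.sum_congr rfl fun i _ => ?_
      rw [MSw_symm G i j]; ring
    · refine Finset.sum_congr rfl fun i _ => ?_
      rw [Finset.mul_sum]
      refine Finset.sum_congr rfl fun j _ => by ring
  rw [expand, key (MSN G x)]
  have h4 : (∑ i, d i * (∑ j, MSw G i j * d j)) = 0 := by
    have h5 : ∀ i, (∑ j, MSw G i j * d j) = t * MSw G i b - t * MSw G i a := by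
      intro i
      have := key (fun j => MSw G i j)
      rw [← this]
      refine Finset.sum_congr rfl fun j _ => by ring
    rw [Finset.sum_congr rfl fun i _ => by rw [h5 i], key]
    rw [MSw_self, MSw_nonadj G hnadj, MSw_nonadj G (fun h => hnadj (G.adj_symm h)), MSw_self]
    ring
  rw [h4]
  ring

lemma MS_one_le_cliqueNum (hn : 0 < n) : 1 ≤ G.cliqueNum := by
  have h : G.IsClique (↑({(⟨0, hn⟩ : Fin n)} : Finset (Fin n))) := by
    rw [Finset.coe_singleton]; exact G.isClique_singleton _
  have := SimpleGraph.IsClique.card_le_cliqueNum (G := G) (tc := h)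
  simpa using this

/-- clique case bound -/
lemma MS_clique_bound (s : Finset (Fin n)) (x : Fin n → ℝ)
    (hx : ∀ i, 0 ≤ x i) (hsupp : ∀ i, i ∉ s → x i = 0) (hsum : ∑ i, x i = 1)
    (hcl : G.IsClique (↑s : Set (Fin n))) :
    MSF G x ≤ 1 - 1 / (G.cliqueNum : ℝ) := by
  have hsum_s : ∑ i ∈ s, x i = 1 := by
    rw [← hsum]
    exact Finset.sum_subset (Finset.subset_univ s) (fun i _ hi => hsupp i hi)
  have hne : s.Nonempty := by
    by_contra h
    rw [Finset.not_nonempty_iff_eq_empty] at h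
    rw [h] at hsum_s; simp at hsum_s
  have hcard_le : s.card ≤ G.cliqueNum :=
    SimpleGraph.IsClique.card_le_cliqueNum (tc := hcl)
  have hcard_pos : 0 < s.card := Finset.card_pos.mpr hne
  have hrestrict : MSF G x = ∑ i ∈ s, ∑ j ∈ s, MSw G i j * (x i * x j) := by
    unfold MSF
    rw [← Finset.sum_subset (Finset.subset_univ s)
      (fun i _ hi => by simp [hsupp i hi])]
    refine Finset.sum_congr rfl fun i _ => ?_
    rw [← Finset.sum_subset (Finset.subset_univ s)
      (fun j _ hj => by simp [hsupp j hj])]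
  have hbound : MSF G x ≤ ∑ i ∈ s, ∑ j ∈ s, (if i = j then 0 else x i * x j) := by
    rw [hrestrict]
    refine Finset.sum_le_sum fun i _ => Finset.sum_le_sum fun j _ => ?_
    by_cases hij : i = j
    · subst hij
      rw [MSw_self, if_pos rfl, zero_mul]
    · rw [if_neg hij]
      unfold MSw
      split_ifs
      · rw [one_mul]
      · rw [zero_mul]; exact mul_nonneg (hx i) (hx j)
  have heval : ∑ i ∈ s, ∑ j ∈ s, (if i = j then 0 else x i * x j)
      = 1 - ∑ i ∈ s, x i * x i := by
    have hinner : ∀ i ∈ s, ∑ j ∈ s, (if i = j then 0 else x i * x j)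
        = x i - x i * x i := by
      intro i hi
      have h2 : ∀ j, (if i = j then 0 else x i * x j)
          = x i * x j - (if i = j then x i * x j else 0) := by
        intro j; split_ifs <;> ring
      rw [Finset.sum_congr rfl fun j _ => h2 j, Finset.sum_sub_distrib,
        Finset.sum_ite_eq s i (fun j => x i * x j), if_pos hi, ← Finset.mul_sum, hsum_s]
      ring
    rw [Finset.sum_congr rfl hinner, Finset.sum_sub_distrib, hsum_s]
  have hCS : 1 ≤ (s.card : ℝ) * ∑ i ∈ s, x i * x i := by
    have := sq_sum_le_card_mul_sum_sq (s := s) (f := x)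
    rw [hsum_s] at this
    simpa [sq] using this
  have hωpos : (0 : ℝ) < (G.cliqueNum : ℝ) := by
    obtain ⟨i, _⟩ := hne
    have := MS_one_le_cliqueNum G (Fin.pos i)
    exact_mod_cast Nat.lt_of_lt_of_le Nat.zero_lt_one this
  have hcard_pos' : (0 : ℝ) < (s.card : ℝ) := by exact_mod_cast hcard_pos
  have hsq : 1 / (G.cliqueNum : ℝ) ≤ ∑ i ∈ s, x i * x i := by
    have h1 : 1 / (s.card : ℝ) ≤ ∑ i ∈ s, x i * x i := by
      rw [div_le_iff₀ hcard_pos']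
      linarith [hCS]
    refine le_trans ?_ h1
    apply one_div_le_one_div_of_le hcard_pos'
    exact_mod_cast hcard_le
  have := le_trans hbound (le_of_eq heval)
  linarith

/-- the shifting step -/
lemma MS_step (s : Finset (Fin n)) (x : Fin n → ℝ)
    (hx : ∀ i, 0 ≤ x i) (hsupp : ∀ i, i ∉ s → x i = 0) (hsum : ∑ i, x i = 1)
    (a b : Fin n) (ha : a ∈ s) (hb : b ∈ s) (hab : a ≠ b) (hnadj : ¬ G.Adj a b)
    (hN : MSN G x a ≤ MSN G x b)
    (IH : ∀ (s' : Finset (Fin n)) (y : Fin n → ℝ), s'.card ≤ s.card - 1 →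
      (∀ i, 0 ≤ y i) → (∀ i, i ∉ s' → y i = 0) → (∑ i, y i) = 1 →
      MSF G y ≤ 1 - 1 / (G.cliqueNum : ℝ)) :
    MSF G x ≤ 1 - 1 / (G.cliqueNum : ℝ) := by
  set x' : Fin n → ℝ :=
    fun i => x i + ((if i = b then x a else 0) - (if i = a then x a else 0)) with hx'
  have hshift := MSF_shift G x a b hnadj
  have hle : MSF G x ≤ MSF G x' := by
    rw [hx', hshift]
    have h1 : 0 ≤ 2 * x a * (MSN G x b - MSN G x a) := by
      have := hx a
      nlinarith
    linarith
  refine le_trans hle (IH (s.erase a) x' ?_ ?_ ?_ ?_)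
  · rw [Finset.card_erase_of_mem ha]
  · intro i
    simp only [hx']
    rcases eq_or_ne i a with rfl | hia
    · rw [if_neg hab, if_pos rfl]; linarith
    · rw [if_neg hia]
      rcases eq_or_ne i b with rfl | hib
      · rw [if_pos rfl]; have := hx i; have := hx a; linarith
      · rw [if_neg hib]; have := hx i; linarith
  · intro i hi
    simp only [hx']
    rcases eq_or_ne i a with rfl | hia
    · rw [if_neg hab, if_pos rfl]; ring
    · have his : i ∉ s := fun h => hi (Finset.mem_erase.mpr ⟨hia, h⟩)
      have hib : i ≠ b := fun h => his (h ▸ hb)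
      rw [if_neg hib, if_neg hia, hsupp i his]; ring
  · simp only [hx']
    rw [Finset.sum_add_distrib, hsum, Finset.sum_sub_distrib]
    simp

/-- main induction -/
lemma MS_upper_aux : ∀ (k : ℕ) (s : Finset (Fin n)) (x : Fin n → ℝ),
    s.card ≤ k → (∀ i, 0 ≤ x i) → (∀ i, i ∉ s → x i = 0) → (∑ i, x i) = 1 →
    MSF G x ≤ 1 - 1 / (G.cliqueNum : ℝ) := by
  intro k
  induction k with
  | zero =>
    intro s x hcard hx hsupp hsum
    have : s = ∅ := Finset.card_eq_zero.mp (Nat.le_zero.mp hcard)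
    subst this
    have : ∑ i, x i = 0 := Finset.sum_eq_zero fun i _ => hsupp i (Finset.notMem_empty i)
    rw [this] at hsum; norm_num at hsum
  | succ k IH =>
    intro s x hcard hx hsupp hsum
    by_cases hz : ∃ i ∈ s, x i = 0
    · obtain ⟨i, hi, hxi⟩ := hz
      refine IH (s.erase i) x ?_ hx ?_ hsum
      · rw [Finset.card_erase_of_mem hi]; omega
      · intro j hj
        rcases eq_or_ne j i with rfl | hji
        · exact hxi
        · exact hsupp j (fun h => hj (Finset.mem_erase.mpr ⟨hji, h⟩))
    · push_neg at hz
      by_cases hcl : G.IsClique (↑s : Set (Fin n))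
      · exact MS_clique_bound G s x hx hsupp hsum hcl
      · rw [SimpleGraph.isClique_iff] at hcl
        rw [Set.Pairwise] at hcl
        push_neg at hcl
        obtain ⟨a, ha, b, hb, hab, hnadj⟩ := hcl
        rw [Finset.mem_coe] at ha hb
        have hIH : ∀ (s' : Finset (Fin n)) (y : Fin n → ℝ), s'.card ≤ s.card - 1 →
            (∀ i, 0 ≤ y i) → (∀ i, i ∉ s' → y i = 0) → (∑ i, y i) = 1 →
            MSF G y ≤ 1 - 1 / (G.cliqueNum : ℝ) := by
          intro s' y h1 h2 h3 h4
          exact IH s' y (by omega) h2 h3 h4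
        rcases le_total (MSN G x a) (MSN G x b) with hN | hN
        · exact MS_step G s x hx hsupp hsum a b ha hb hab hnadj hN hIH
        · exact MS_step G s x hx hsupp hsum b a hb ha (Ne.symm hab)
            (fun h => hnadj (G.adj_symm h)) hN hIH

lemma MS_upper (x : Fin n → ℝ) (hx : ∀ i, 0 ≤ x i) (hsum : ∑ i, x i = 1) :
    (∑ i, ∑ j, if G.Adj i j then x i * x j else 0) ≤ 1 - 1 / (G.cliqueNum : ℝ) := by
  rw [← MSF_eq]
  exact MS_upper_aux G (Finset.univ.card) Finset.univ x le_rfl hx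
    (fun i hi => absurd (Finset.mem_univ i) hi) hsum

end MS

theorem density_matrix_QP (n : ℕ) (hn : 0 < n)
    (G : SimpleGraph (Fin n)) [DecidableRel G.Adj] :
    IsGreatest
      {v : ℝ | ∃ X : Matrix (Fin n) (Fin n) ℝ, Xᵀ = X ∧ X.PosSemidef ∧ X.trace = 1 ∧
        v = ∑ i, ∑ j, if G.Adj i j then X i i * X j j else 0}
      (1 - 1 / (G.cliqueNum : ℝ)) := by
  have hω1 : 1 ≤ G.cliqueNum := MS_one_le_cliqueNum G hn
  have hωpos : (0 : ℝ) < (G.cliqueNum : ℝ) := by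
    exact_mod_cast Nat.lt_of_lt_of_le Nat.zero_lt_one hω1
  have hωne : (G.cliqueNum : ℝ) ≠ 0 := ne_of_gt hωpos
  constructor
  · -- membership: uniform distribution on a maximum clique
    obtain ⟨s, hs⟩ := G.exists_isNClique_cliqueNum
    have hscard : s.card = G.cliqueNum := hs.card_eq
    set c : ℝ := (G.cliqueNum : ℝ)⁻¹ with hc
    set x : Fin n → ℝ := fun i => if i ∈ s then c else 0 with hxdef
    have hx0 : ∀ i, 0 ≤ x i := by
      intro i; dsimp only [x]; split_ifs
      · positivity
      · exact le_refl 0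
    refine ⟨Matrix.diagonal x, Matrix.diagonal_transpose x,
      Matrix.PosSemidef.diagonal (fun i => hx0 i), ?_, ?_⟩
    · rw [Matrix.trace_diagonal]
      have : ∑ i, x i = (s.card : ℝ) * c := by
        dsimp only [x]
        rw [Finset.sum_ite_mem, Finset.univ_inter, Finset.sum_const, nsmul_eq_mul]
      rw [this, hscard, hc, mul_inv_cancel₀ hωne]
    -- value computation
    simp only [Matrix.diagonal_apply_eq]
    have hrestrict : (∑ i, ∑ j, if G.Adj i j then x i * x j else 0)
        = ∑ i ∈ s, ∑ j ∈ s, (if G.Adj i j then x i * x j else 0) := by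
      rw [← Finset.sum_subset (Finset.subset_univ s) (fun i _ hi => by
        refine Finset.sum_eq_zero fun j _ => ?_
        have : x i = 0 := by dsimp only [x]; rw [if_neg hi]
        rw [this]; split_ifs <;> ring)]
      refine Finset.sum_congr rfl fun i _ => ?_
      rw [← Finset.sum_subset (Finset.subset_univ s) (fun j _ hj => by
        have : x j = 0 := by dsimp only [x]; rw [if_neg hj]
        rw [this]; split_ifs <;> ring)]
    have hterm : ∀ i ∈ s, ∀ j ∈ s, (if G.Adj i j then x i * x j else 0)
        = (if i = j then 0 else c * c) := by
      intro i hi j hj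
      by_cases hij : i = j
      · subst hij
        rw [if_neg (G.irrefl), if_pos rfl]
      · have hadj : G.Adj i j := hs.isClique (Finset.mem_coe.mpr hi) (Finset.mem_coe.mpr hj) hij
        rw [if_pos hadj, if_neg hij]
        dsimp only [x]
        rw [if_pos hi, if_pos hj]
    have hinner : ∀ i ∈ s, ∑ j ∈ s, (if i = j then 0 else c * c)
        = (s.card : ℝ) * (c * c) - c * c := by
      intro i hi
      have h2 : ∀ j, (if i = j then 0 else c * c)
          = c * c - (if i = j then c * c else 0) := by
        intro j; split_ifs <;> ring
      rw [Finset.sum_congr rfl fun j _ => h2 j, Finset.sum_sub_distrib,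
        Finset.sum_ite_eq s i (fun _ => c * c), if_pos hi, Finset.sum_const, nsmul_eq_mul]
    rw [hrestrict,
      Finset.sum_congr rfl (fun i hi => Finset.sum_congr rfl (fun j hj => hterm i hi j hj)),
      Finset.sum_congr rfl hinner, Finset.sum_const, nsmul_eq_mul, hscard, hc]
    field_simp
  · -- upper bound
    rintro v ⟨X, hXt, hXpsd, hXtr, rfl⟩
    have hx : ∀ i, 0 ≤ X i i := fun i => hXpsd.diag_nonneg
    have hsum : ∑ i, X i i = 1 := by
      simpa [Matrix.trace, Matrix.diag] using hXtr
    exact MS_upper G (fun i => X i i) hx hsum
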